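/- Let P be a monic polynomial of degree p over a field K of characteristic 0 with distinct roots x_1,...,x_m of multiplicities μ_1,...,μ_m (Σμ_i = p) in an algebraic closure. Then the generalized (confluent) Vandermonde determinant V[P], whose columns are v_p(x_i), v_p'(x_i), ..., (1/(μ_i−1)!)·v_p^{(μ_i−1)}(x_i) for i = 1,...,m, where v_p(x) = (1, x, ..., x^{p−1})^T, equals ∏_{1 ≤ i < j ≤ m} (x_j − x_i)^{μ_i μ_j}. -/

import Mathlib

noncomputable section

open Polynomial Finset

variable {R : Type*} [CommRing R]

/-- Hermite-derivated Vandermonde column: entry in row `r` of the column attached to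
the pair `(z, j)` is `(1/j!)·dʲ/dzʲ zʳ = C(r,j)·z^(r-j)`. -/
def hcol (n : ℕ) (zj : R × ℕ) : Fin n → R :=
  fun r => ((r : ℕ).choose zj.2 : R) * zj.1 ^ ((r : ℕ) - zj.2)

/-- Generalized (confluent) Vandermonde determinant of a list of
(point, derivation order) pairs. -/
def gvd (l : List (R × ℕ)) : R :=
  (Matrix.of fun i j : Fin l.length => hcol l.length (l.get j) i).det

/-- View a list of ring elements as underivated column data. -/
def plain (l : List R) : List (R × ℕ) := l.map (fun x => (x, 0))

/-- `Pi2 A B = ∏_{x ∈ A, y ∈ B} (x - y)`. -/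
def Pi2 (A B : List R) : R := (A.map fun x => (B.map fun y => x - y).prod).prod

/-- The ordered sublist of values of `f` indexed by a finite set of positions. -/
def subL {α : Type*} {n : ℕ} (f : Fin n → α) (S : Finset (Fin n)) : List α :=
  (S.sort (· ≤ ·)).map f

/-- The list enumerating first the complement of `S` in increasing order,
then `S` in increasing order. -/
def splitList {n : ℕ} (S : Finset (Fin n)) : List (Fin n) :=
  (Sᶜ.sort (· ≤ ·)) ++ (S.sort (· ≤ ·))

lemma splitList_length {n : ℕ} (S : Finset (Fin n)) : (splitList S).length = n := by
  have h : S.card ≤ n := le_trans (Finset.card_le_univ S) (by simp)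
  simp [splitList, Finset.card_compl]
  omega

lemma splitList_nodup {n : ℕ} (S : Finset (Fin n)) : (splitList S).Nodup := by
  refine List.Nodup.append (Finset.sort_nodup _ _) (Finset.sort_nodup _ _) ?_
  intro a ha hb
  rw [Finset.mem_sort] at ha hb
  exact (Finset.mem_compl.mp ha) hb

/-- The permutation of `Fin n` sending `i` to the `i`-th element of the list
`(Sᶜ sorted) ++ (S sorted)`. -/
def splitPerm {n : ℕ} (S : Finset (Fin n)) : Equiv.Perm (Fin n) :=
  Equiv.ofBijective (fun i => (splitList S).get (finCongr (splitList_length S).symm i))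
    (Finite.injective_iff_bijective.mp
      (fun i j h => (finCongr (splitList_length S).symm).injective
        (List.nodup_iff_injective_get.mp (splitList_nodup S) h)))

/-- The signature `s_S` of the permutation putting the ambient ordered set in the
order (complement of S)‖S. -/
def sgnK {n : ℕ} (S : Finset (Fin n)) : ℤ := Equiv.Perm.sign (splitPerm S)

/-- `V[L‖U)` : generalized Vandermonde determinant over `K[U]` of derivated columns
given by `l` followed by the plain column of the variable `U`. -/
def gvdU {K : Type*} [Field K] (l : List (K × ℕ)) : Polynomial K :=
  gvd ((l.map fun zj => (Polynomial.C zj.1, zj.2)) ++ [(Polynomial.X, (0:ℕ))])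

/-- Multivariate version: `V[l‖U₁‖…‖U_u)`. -/
def gvdMU {K : Type*} [Field K] (u : ℕ) (l : List (K × ℕ)) : MvPolynomial (Fin u) K :=
  gvd ((l.map fun zj => (MvPolynomial.C zj.1, zj.2)) ++
    (List.finRange u).map (fun i => (MvPolynomial.X i, (0:ℕ))))

/-- The multivariate Vandermonde polynomial `∏_{i < j} (U_j - U_i)`. -/
def mvVandermonde (K : Type*) [Field K] (u : ℕ) : MvPolynomial (Fin u) K :=
  ∏ j : Fin u, ∏ i ∈ Finset.Iio j, (MvPolynomial.X j - MvPolynomial.X i)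

/-- The ordered root multiset attached to distinct roots `x i` with
multiplicities `μ i`. -/
def rootList {K : Type*} (x : Fin m → K) (μ : Fin m → ℕ) : List (K × ℕ) :=
  (List.finRange m).flatMap (fun i => (List.range (μ i)).map (fun j => (x i, j)))

/-- The generalized Sylvester double sum `Sylv^{k,ℓ}` of two monic polynomials
given by their root multisets `Pl` and `Ql`. -/
def sylv {K : Type*} [Field K] (Pl Ql : List (K × ℕ)) (k l : ℕ) : Polynomial K :=
  Polynomial.C ((gvd Pl * gvd Ql)⁻¹) *
    ∑ S ∈ Finset.powersetCard k (Finset.univ : Finset (Fin Pl.length)),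
      ∑ T ∈ Finset.powersetCard l (Finset.univ : Finset (Fin Ql.length)),
        (sgnK S * sgnK T) •
          (Polynomial.C (gvd (subL Ql.get Tᶜ ++ subL Pl.get Sᶜ)) *
            gvdU (subL Ql.get T ++ subL Pl.get S))

/-- `MSylv^{k,ℓ}(P,Q)(U) · V(U)` : the multi Sylvester double sum multiplied by the
ordinary Vandermonde determinant of the block `U` of `u` indeterminates. -/
def msylvV {K : Type*} [Field K] (Pl Ql : List (K × ℕ)) (k l u : ℕ) :
    MvPolynomial (Fin u) K :=
  MvPolynomial.C ((gvd Pl * gvd Ql)⁻¹) *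
    ∑ S ∈ Finset.powersetCard k (Finset.univ : Finset (Fin Pl.length)),
      ∑ T ∈ Finset.powersetCard l (Finset.univ : Finset (Fin Ql.length)),
        (sgnK S * sgnK T) •
          (MvPolynomial.C (gvd (subL Ql.get Tᶜ ++ subL Pl.get Sᶜ)) *
            gvdMU u (subL Ql.get T ++ subL Pl.get S))

/-- The ordered root multiset of a polynomial over an algebraically closed field. -/
def rootListOf {K : Type*} [Field K] (P : Polynomial K) : List (K × ℕ) :=
  letI := Classical.decEq K
  P.roots.toFinset.toList.flatMap
    (fun z => (List.range (P.rootMultiplicity z)).map (fun j => (z, j)))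

/-- The Sylvester double sum of two not-necessarily-monic polynomials. -/
def sylvP {K : Type*} [Field K] (P Q : Polynomial K) (k l : ℕ) : Polynomial K :=
  Polynomial.C (P.leadingCoeff ^ (Q.natDegree - (k + l)) *
      Q.leadingCoeff ^ (P.natDegree - (k + l))) *
    sylv (rootListOf P) (rootListOf Q) k l

/-- Rows of the Sylvester–Habicht matrix at level `j`:
`X^{q-j-1}P, …, P, Q, X Q, …, X^{p-j-1}Q`. -/
def sylvHabRow {K : Type*} [Field K] (P Q : Polynomial K) (j i : ℕ) : Polynomial K :=
  if i < Q.natDegree - j then Polynomial.X ^ (Q.natDegree - j - 1 - i) * P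
  else Polynomial.X ^ (i - (Q.natDegree - j)) * Q

/-- The `j`-th subresultant polynomial of `P` and `Q`, as the polynomial determinant
of the Sylvester–Habicht matrix at level `j`. -/
def Sres {K : Type*} [Field K] (P Q : Polynomial K) (j : ℕ) : Polynomial K :=
  (Matrix.of fun i c : Fin (P.natDegree + Q.natDegree - 2 * j) =>
    if (c : ℕ) < P.natDegree + Q.natDegree - 2 * j - 1 then
      Polynomial.C ((sylvHabRow P Q j i).coeff (P.natDegree + Q.natDegree - j - 1 - c))
    else
      ∑ t ∈ Finset.range (j + 1),
        Polynomial.C ((sylvHabRow P Q j i).coeff t) * Polynomial.X ^ t).det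

/-- Iterated normalized Hermite derivation of a multivariate polynomial: for each
variable `i`, apply `(1/(c i).2!)·∂^{(c i).2}/∂X_i^{(c i).2}`. -/
def hderiv {K : Type*} [Field K] {n : ℕ} (c : Fin n → K × ℕ)
    (f : MvPolynomial (Fin n) K) : MvPolynomial (Fin n) K :=
  (List.finRange n).foldl
    (fun g i => (((c i).2.factorial : K)⁻¹) • ((MvPolynomial.pderiv i)^[(c i).2] g)) f

/-- Hermite evaluation: apply the normalized derivations prescribed by `c` and
then substitute the points prescribed by `c`. -/
def hermiteEval {K : Type*} [Field K] {n : ℕ} (c : Fin n → K × ℕ)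
    (f : MvPolynomial (Fin n) K) : K :=
  MvPolynomial.eval (fun i => (c i).1) (hderiv c f)


section AuxGvd
variable {K : Type*} [Field K]

lemma taylor_coeff_eq_sum (f : K[X]) {n : ℕ} (hf : f.natDegree < n) (w : K) (j : ℕ) :
    (Polynomial.taylor w f).coeff j
      = ∑ r : Fin n, f.coeff r * (((r : ℕ).choose j : K) * w ^ ((r : ℕ) - j)) := by
  rw [Polynomial.taylor_coeff, Fin.sum_univ_eq_sum_range
    (fun r => f.coeff r * ((r.choose j : K) * w ^ (r - j)))]
  conv_lhs => rw [Polynomial.as_sum_range' f n hf]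
  rw [map_sum, Polynomial.eval_finset_sum]
  refine Finset.sum_congr rfl fun r _ => ?_
  rw [Polynomial.hasseDeriv_monomial, Polynomial.eval_monomial]
  ring

lemma taylor_pow_X_sub_C (z w : K) (i : ℕ) :
    Polynomial.taylor w ((X - C z) ^ i) = (X + C (w - z)) ^ i := by
  rw [taylor_apply, pow_comp, sub_comp, X_comp, C_comp, C_sub]
  ring_nf

lemma gvd_eq_det_taylor (l : List (K × ℕ)) (z : K) :
    gvd l = (Matrix.of fun i k : Fin l.length =>
      ((X + C ((l.get k).1 - z)) ^ (i : ℕ)).coeff (l.get k).2).det := by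
  classical
  set n := l.length with hn
  set A : Matrix (Fin n) (Fin n) K :=
    Matrix.of (fun i r : Fin n => ((X - C z) ^ (i : ℕ)).coeff (r : ℕ)) with hA
  have hdetA : A.det = 1 := by
    rw [Matrix.det_of_lowerTriangular A ?_]
    · refine Finset.prod_eq_one fun i _ => ?_
      have := ((monic_X_sub_C z).pow (i : ℕ)).coeff_natDegree
      simpa [hA, natDegree_pow] using this
    · intro i r h
      have hir : (i : ℕ) < (r : ℕ) := h
      have : ((X - C z) ^ (i : ℕ)).natDegree < (r : ℕ) := by
        simpa [natDegree_pow] using hir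
      simpa [hA] using Polynomial.coeff_eq_zero_of_natDegree_lt this
  have key : (Matrix.of fun i k : Fin n =>
      ((X + C ((l.get k).1 - z)) ^ (i : ℕ)).coeff (l.get k).2)
      = A * (Matrix.of fun i j : Fin n => hcol n (l.get j) i) := by
    ext i k
    rw [Matrix.mul_apply]
    have hdeg : ((X - C z) ^ (i : ℕ)).natDegree < n := by
      simpa [natDegree_pow] using i.isLt
    have := taylor_coeff_eq_sum ((X - C z) ^ (i : ℕ)) hdeg (l.get k).1 (l.get k).2
    rw [taylor_pow_X_sub_C] at this
    simpa [hA, hcol, Matrix.of_apply] using this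
  rw [key, Matrix.det_mul, hdetA, one_mul]
  rfl

variable {m : ℕ}

lemma rootList_pairwise (x : Fin m → K) (μ : Fin m → ℕ) (hx : Function.Injective x) :
    List.Pairwise (fun a b : K × ℕ => a.1 = b.1 → a.2 < b.2) (rootList x μ) := by
  rw [rootList, List.flatMap_def, List.pairwise_flatten]
  constructor
  · intro l hl
    simp only [List.mem_map, List.mem_finRange] at hl
    obtain ⟨i, -, rfl⟩ := hl
    rw [List.pairwise_map]
    exact (List.pairwise_lt_range).imp (fun h => fun _ => h)
  · have : List.Pairwise (· ≠ ·) (List.finRange m) :=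
      (List.pairwise_lt_finRange m).imp (fun h => h.ne)
    rw [List.pairwise_map]
    refine this.imp ?_
    rintro i₁ i₂ hne a ha b hb
    simp only [List.mem_map] at ha hb
    obtain ⟨j₁, -, rfl⟩ := ha
    obtain ⟨j₂, -, rfl⟩ := hb
    intro h
    exact absurd (hx h) hne

lemma rootList_mem {x : Fin m → K} {μ : Fin m → ℕ} {wj : K × ℕ}
    (h : wj ∈ rootList x μ) : ∃ i, wj.1 = x i ∧ wj.2 < μ i := by
  rw [rootList, List.mem_flatMap] at h
  obtain ⟨i, -, hmem⟩ := h
  simp only [List.mem_map, List.mem_range] at hmem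
  obtain ⟨j, hj, rfl⟩ := hmem
  exact ⟨i, rfl, hj⟩

lemma rootList_map_sum {M : Type*} [AddCommMonoid M] (x : Fin m → K) (μ : Fin m → ℕ)
    (F : K × ℕ → M) :
    ((rootList x μ).map F).sum = ∑ i, ∑ b ∈ Finset.range (μ i), F (x i, b) := by
  rw [rootList, List.map_flatMap, List.flatMap_def, List.sum_flatten, List.map_map]
  rw [← List.ofFn_eq_map, List.sum_ofFn]
  refine Finset.sum_congr rfl fun i _ => ?_
  simp only [Function.comp_apply, List.map_map]
  induction (μ i) with
  | zero => simp
  | succ n ih =>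
      rw [List.range_succ, List.map_append, List.sum_append, Finset.sum_range_succ, ih]; simp

lemma rootList_map_prod {M : Type*} [CommMonoid M] (x : Fin m → K) (μ : Fin m → ℕ)
    (F : K × ℕ → M) :
    ((rootList x μ).map F).prod = ∏ i, ∏ b ∈ Finset.range (μ i), F (x i, b) := by
  rw [rootList, List.map_flatMap, List.flatMap_def, List.prod_flatten, List.map_map]
  rw [← List.ofFn_eq_map, List.prod_ofFn]
  refine Finset.prod_congr rfl fun i _ => ?_
  simp only [Function.comp_apply, List.map_map]
  induction (μ i) with
  | zero => simp
  | succ n ih =>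
      rw [List.range_succ, List.map_append, List.prod_append, Finset.prod_range_succ, ih]; simp

lemma sum_fin_get' {α : Type*} {M : Type*} [AddCommMonoid M] (l : List α) (F : α → M) :
    ∑ k : Fin l.length, F (l.get k) = (l.map F).sum := by
  conv_rhs => rw [← List.ofFn_get l]
  rw [List.map_ofFn, List.sum_ofFn]
  rfl

lemma prod_fin_get' {α : Type*} {M : Type*} [CommMonoid M] (l : List α) (F : α → M) :
    ∏ k : Fin l.length, F (l.get k) = (l.map F).prod := by
  conv_rhs => rw [← List.ofFn_get l]
  rw [List.map_ofFn, List.prod_ofFn]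
  rfl

lemma key_sum (u : K) (i ν j M : ℕ) (hj : j < M) :
    (∑ c ∈ Finset.range M, (((X + C u) ^ i).coeff c *
      (if c ≤ j then ((X + C u) ^ ν).coeff (j - c) else 0)))
    = ((X + C u) ^ (ν + i)).coeff j := by
  have h1 : (∑ c ∈ Finset.range M, (((X + C u) ^ i).coeff c *
      (if c ≤ j then ((X + C u) ^ ν).coeff (j - c) else 0)))
      = ∑ c ∈ Finset.range M, (if c ≤ j then
          ((X + C u) ^ i).coeff c * ((X + C u) ^ ν).coeff (j - c) else 0) := by
    refine Finset.sum_congr rfl fun c _ => ?_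
    by_cases hc : c ≤ j <;> simp [hc]
  rw [h1, ← Finset.sum_filter]
  have h2 : (Finset.range M).filter (fun c => c ≤ j) = Finset.range (j + 1) := by
    ext c
    simp only [Finset.mem_filter, Finset.mem_range]
    omega
  rw [h2, Nat.add_comm ν i, pow_add, Polynomial.coeff_mul,
    Finset.Nat.sum_antidiagonal_eq_sum_range_succ_mk]

lemma gvd_step (z : K) (ν : ℕ) (x' : Fin m → K) (μ' : Fin m → ℕ)
    (hx' : Function.Injective x') :
    gvd ((List.range ν).map (fun j => ((z : K), j)) ++ rootList x' μ') =
      (∏ i, (x' i - z) ^ (ν * μ' i)) * gvd (rootList x' μ') := by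
  classical
  set l' := rootList x' μ' with hl'
  have hget₁' : ∀ (t : ℕ) (h : t < ((List.range ν).map (fun j => ((z : K), j)) ++ l').length),
      t < ν → ((List.range ν).map (fun j => ((z : K), j)) ++ l')[t] = (z, t) := by
    intro t h ht
    rw [List.getElem_append_left (by simpa using ht)]
    simp
  have hget₂' : ∀ (t : ℕ) (h : ν + t < ((List.range ν).map (fun j => ((z : K), j)) ++ l').length)
      (ht : t < l'.length), ((List.range ν).map (fun j => ((z : K), j)) ++ l')[ν + t] = l'[t] := by
    intro t h ht
    rw [List.getElem_append_right (by simp)]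
    simp
  set l : List (K × ℕ) := (List.range ν).map (fun j => (z, j)) ++ l' with hl
  have hlen : l.length = ν + l'.length := by simp [hl]
  have hget₁ : ∀ (q : Fin l.length) (k : Fin ν), (q : ℕ) = (k : ℕ) → l.get q = (z, (k : ℕ)) := by
    intro q k hq
    rw [List.get_eq_getElem]
    simp only [hq]
    exact hget₁' _ (by omega) k.isLt
  have hget₂ : ∀ (q : Fin l.length) (k : Fin l'.length), (q : ℕ) = ν + (k : ℕ) →
      l.get q = l'.get k := by
    intro q k hq
    rw [List.get_eq_getElem, List.get_eq_getElem]
    simp only [hq]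
    exact hget₂' _ (by omega) k.isLt
  rw [gvd_eq_det_taylor l z]
  set e : Fin ν ⊕ Fin l'.length ≃ Fin l.length := finSumFinEquiv.trans (finCongr hlen.symm)
    with he
  set N : Matrix (Fin l.length) (Fin l.length) K := Matrix.of fun i k =>
      ((X + C ((l.get k).1 - z)) ^ (i : ℕ)).coeff (l.get k).2 with hN
  have hvl : ∀ k : Fin ν, ((e (Sum.inl k)) : ℕ) = (k : ℕ) := by intro k; simp [he]
  have hvr : ∀ k : Fin l'.length, ((e (Sum.inr k)) : ℕ) = ν + (k : ℕ) := by intro k; simp [he]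
  rw [← Matrix.det_submatrix_equiv_self e]
  have h11 : (N.submatrix e e).toBlocks₁₁ = 1 := by
    ext i k
    simp only [Matrix.toBlocks₁₁, Matrix.submatrix_apply, hN, Matrix.of_apply]
    rw [hget₁ (e (Sum.inl k)) k (hvl k)]
    simp only [sub_self, map_zero, add_zero, coeff_X_pow, hvl i]
    simp [Matrix.one_apply, Fin.val_inj, eq_comm]
  have h21 : (N.submatrix e e).toBlocks₂₁ = 0 := by
    ext i k
    simp only [Matrix.toBlocks₂₁, Matrix.submatrix_apply, hN, Matrix.of_apply]
    rw [hget₁ (e (Sum.inl k)) k (hvl k)]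
    simp only [sub_self, map_zero, add_zero, coeff_X_pow, hvr i]
    have hk := k.isLt
    split <;> [omega; simp]
  have hblock : (N.submatrix e e).det = (N.submatrix e e).toBlocks₂₂.det := by
    conv_lhs => rw [← Matrix.fromBlocks_toBlocks (N.submatrix e e)]
    rw [h11, h21, Matrix.det_fromBlocks_zero₂₁, Matrix.det_one, one_mul]
  rw [hblock]
  set D := (N.submatrix e e).toBlocks₂₂ with hD
  have hDentry : ∀ (i k : Fin l'.length),
      D i k = ((X + C ((l'.get k).1 - z)) ^ (ν + (i : ℕ))).coeff (l'.get k).2 := by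
    intro i k
    simp only [hD, Matrix.toBlocks₂₂, Matrix.submatrix_apply, hN, Matrix.of_apply]
    rw [hget₂ (e (Sum.inr k)) k (hvr k), hvr i]
  set E : Matrix (Fin l'.length) (Fin l'.length) K := Matrix.of fun i k =>
      ((X + C ((l'.get k).1 - z)) ^ (i : ℕ)).coeff (l'.get k).2 with hE
  set T : Matrix (Fin l'.length) (Fin l'.length) K := Matrix.of fun k k' =>
      if (l'.get k).1 = (l'.get k').1 ∧ (l'.get k).2 ≤ (l'.get k').2
      then ((X + C ((l'.get k').1 - z)) ^ ν).coeff ((l'.get k').2 - (l'.get k).2) else 0 with hT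
  have hmul : D = E * T := by
    ext i k'
    rw [hDentry, Matrix.mul_apply]
    have hmem : l'.get k' ∈ rootList x' μ' := by
      rw [← hl']
      exact List.get_mem l' k'
    obtain ⟨i₀, hw, hj⟩ := rootList_mem hmem
    have hsum : ∑ k, E i k * T k k' =
        (l'.map (fun a => ((X + C (a.1 - z)) ^ (i : ℕ)).coeff a.2 *
          (if a.1 = (l'.get k').1 ∧ a.2 ≤ (l'.get k').2
            then ((X + C ((l'.get k').1 - z)) ^ ν).coeff ((l'.get k').2 - a.2) else 0))).sum := by
      rw [← sum_fin_get']
      simp only [hE, hT, Matrix.of_apply]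
    have hms := rootList_map_sum x' μ' (fun a => ((X + C (a.1 - z)) ^ (i : ℕ)).coeff a.2 *
          (if a.1 = (l'.get k').1 ∧ a.2 ≤ (l'.get k').2
            then ((X + C ((l'.get k').1 - z)) ^ ν).coeff ((l'.get k').2 - a.2) else 0))
    rw [← hl'] at hms
    rw [hsum, hms]
    have hkill : ∀ b ∈ (Finset.univ : Finset (Fin m)), b ≠ i₀ →
        (∑ c ∈ Finset.range (μ' b), (((X + C (x' b - z)) ^ (i : ℕ)).coeff c *
          (if x' b = (l'.get k').1 ∧ c ≤ (l'.get k').2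
            then ((X + C ((l'.get k').1 - z)) ^ ν).coeff ((l'.get k').2 - c) else 0))) = 0 := by
      intro b _ hb
      refine Finset.sum_eq_zero fun c _ => ?_
      have hcond : ¬ (x' b = (l'.get k').1 ∧ c ≤ (l'.get k').2) := by
        rintro ⟨h1, -⟩
        exact hb (hx' (h1.trans hw))
      rw [if_neg hcond, mul_zero]
    rw [Finset.sum_eq_single i₀ hkill (fun h => absurd (Finset.mem_univ i₀) h)]
    symm
    have hxw : x' i₀ = (l'.get k').1 := hw.symm
    rw [hxw]
    simp only [eq_self_iff_true, true_and]
    have hj' : (l'.get k').2 < μ' i₀ := hj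
    exact key_sum ((l'.get k').1 - z) (i : ℕ) ν (l'.get k').2 (μ' i₀) hj'
  rw [hmul, Matrix.det_mul]
  have hdetE : E.det = gvd l' := by
    rw [gvd_eq_det_taylor l' z]
  have htri : T.BlockTriangular id := by
    intro k k' hlt
    have hp := rootList_pairwise x' μ' hx'
    rw [← hl', List.pairwise_iff_getElem] at hp
    have hrel := hp (k' : ℕ) (k : ℕ) k'.isLt k.isLt hlt
    simp only [hT, Matrix.of_apply]
    rw [if_neg]
    rintro ⟨h1, h2⟩
    simp only [List.get_eq_getElem] at h1 h2
    have := hrel h1.symm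
    omega
  have hdetT : T.det = ∏ i, (x' i - z) ^ (ν * μ' i) := by
    rw [Matrix.det_of_upperTriangular htri]
    have hdiag : ∀ k : Fin l'.length, T k k = ((l'.get k).1 - z) ^ ν := by
      intro k
      have hc : ((l'.get k).1 = (l'.get k).1 ∧ (l'.get k).2 ≤ (l'.get k).2) := ⟨rfl, le_rfl⟩
      simp only [hT, Matrix.of_apply, if_pos hc, Nat.sub_self]
      rw [coeff_X_add_C_pow]
      simp
    have h3 : (∏ k, T k k) = (l'.map (fun a => (a.1 - z) ^ ν)).prod := by
      rw [← prod_fin_get']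
      exact Finset.prod_congr rfl (fun k _ => hdiag k)
    have hmp := rootList_map_prod x' μ' (fun a => (a.1 - z) ^ ν)
    rw [← hl'] at hmp
    rw [h3, hmp]
    refine Finset.prod_congr rfl fun i _ => ?_
    simp [Finset.prod_const, Finset.card_range, ← pow_mul]
  rw [hdetE, hdetT]
  ring

lemma gvd_rootList_aux :
    ∀ (m : ℕ) (x : Fin m → K) (μ : Fin m → ℕ), Function.Injective x →
      gvd (rootList x μ) = ∏ i, ∏ j ∈ Finset.Ioi i, (x j - x i) ^ (μ i * μ j) := by
  intro m
  induction m with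
  | zero =>
      intro x μ _
      have h : rootList x μ = [] := by simp [rootList]
      rw [h, show gvd ([] : List (K × ℕ)) = 1 from Matrix.det_fin_zero]
      simp
  | succ n ih =>
      intro x μ hx
      have hsplit : rootList x μ = (List.range (μ 0)).map (fun j => ((x 0 : K), j))
          ++ rootList (x ∘ Fin.succ) (μ ∘ Fin.succ) := by
        rw [rootList, List.finRange_succ, List.flatMap_cons, List.flatMap_map]
        rfl
      rw [hsplit, gvd_step (x 0) (μ 0) (x ∘ Fin.succ) (μ ∘ Fin.succ)
        (hx.comp (Fin.succ_injective n)), ih _ _ (hx.comp (Fin.succ_injective n)),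
        Fin.prod_univ_succ]
      congr 1
      · rw [Fin.prod_Ioi_zero]
        rfl
      · refine Finset.prod_congr rfl fun i _ => ?_
        rw [Fin.prod_Ioi_succ]
        rfl

end AuxGvd

/-- the generalized (confluent) Vandermonde determinant of the root
multiset of a monic polynomial equals `∏_{i<j} (x_j - x_i)^{μ_i μ_j}`. -/
theorem gvd_rootList {K : Type*} [Field K] [CharZero K] {m p : ℕ}
    (x : Fin m → K) (μ : Fin m → ℕ) (hx : Function.Injective x)
    (hμ : ∀ i, 0 < μ i) (hp : ∑ i, μ i = p) :
    gvd (rootList x μ) =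
      ∏ i : Fin m, ∏ j ∈ Finset.Ioi i, (x j - x i) ^ (μ i * μ j) := by
  exact gvd_rootList_aux m x μ hx

end
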